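/- If G is a 4-regular planar graph on n ≥ 7 vertices, then there exists a vertex v ∈ V(G) such that no vertex w ≠ v satisfies N(w) = N(v). -/

import Mathlib

/-- `H` is a minor of `G`. -/
def HasMinor {V W : Type*} (G : SimpleGraph V) (H : SimpleGraph W) : Prop :=
  ∃ f : W → Set V, (∀ w, (f w).Nonempty) ∧ (∀ w, (G.induce (f w)).Connected) ∧
    (∀ w₁ w₂, w₁ ≠ w₂ → Disjoint (f w₁) (f w₂)) ∧
    (∀ w₁ w₂, H.Adj w₁ w₂ → ∃ a ∈ f w₁, ∃ b ∈ f w₂, G.Adj a b)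

/-- A graph is planar iff it has no `K₅` minor and no `K_{3,3}` minor. -/
def IsPlanar {V : Type*} (G : SimpleGraph V) : Prop :=
  ¬ HasMinor G (⊤ : SimpleGraph (Fin 5)) ∧
    ¬ HasMinor G (completeBipartiteGraph (Fin 3) (Fin 3))

lemma induce_singleton_connected {V : Type*} (G : SimpleGraph V) (x : V) :
    (G.induce {x}).Connected := by
  have h := (SimpleGraph.Subgraph.singletonSubgraph_connected (G := G) (v := x)).induce_verts
  simpa using h

lemma hasMinor_K33_of_points {V : Type*} (G : SimpleGraph V) (g : Fin 3 ⊕ Fin 3 → V)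
    (hinj : Function.Injective g)
    (hadj : ∀ i j, G.Adj (g (Sum.inl i)) (g (Sum.inr j))) :
    HasMinor G (completeBipartiteGraph (Fin 3) (Fin 3)) := by
  refine ⟨fun w => {g w}, fun w => ⟨g w, rfl⟩, fun w => induce_singleton_connected G (g w),
    ?_, ?_⟩
  · intro w₁ w₂ hne
    exact Set.disjoint_singleton.2 (fun h => hne (hinj h))
  · rintro (i | i) (j | j) h <;> simp only [completeBipartiteGraph_adj] at h <;> simp at h
    · exact ⟨_, rfl, _, rfl, hadj i j⟩
    · exact ⟨_, rfl, _, rfl, (hadj j i).symm⟩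

lemma even_card_of_invol {α : Type*} [DecidableEq α] (s : Finset α) (f : α → α)
    (h1 : ∀ a ∈ s, f a ∈ s) (h2 : ∀ a ∈ s, f (f a) = a) (h3 : ∀ a ∈ s, f a ≠ a) :
    Even s.card := by
  classical
  induction s using Finset.strongInduction with
  | _ s ih =>
    rcases s.eq_empty_or_nonempty with rfl | ⟨a, ha⟩
    · simp
    · have hfa : f a ∈ s := h1 a ha
      have hfa' : f a ∈ s.erase a := Finset.mem_erase.2 ⟨h3 a ha, hfa⟩
      set s' := (s.erase a).erase (f a) with hs'
      have hss : s' ⊂ s :=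
        Finset.ssubset_of_subset_of_ssubset (Finset.erase_subset _ _) (Finset.erase_ssubset ha)
      have hmem : ∀ b ∈ s', b ∈ s := fun b hb =>
        Finset.mem_of_mem_erase (Finset.mem_of_mem_erase hb)
      have h1' : ∀ b ∈ s', f b ∈ s' := by
        intro b hb
        have hbs := hmem b hb
        have hbne : b ≠ f a := Finset.ne_of_mem_erase hb
        have hbne2 : b ≠ a := Finset.ne_of_mem_erase (Finset.mem_of_mem_erase hb)
        refine Finset.mem_erase.2 ⟨?_, Finset.mem_erase.2 ⟨?_, h1 b hbs⟩⟩
        · intro hfb; exact hbne2 (by rw [← h2 b hbs, hfb, h2 a ha])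
        · intro hfb; exact hbne (by rw [← h2 b hbs, hfb])
      have hcard : s.card = s'.card + 2 := by
        rw [hs', Finset.card_erase_of_mem hfa', Finset.card_erase_of_mem ha]
        have h2le : 2 ≤ s.card := Finset.one_lt_card.2 ⟨a, ha, f a, hfa, (h3 a ha).symm⟩
        omega
      have := ih s' hss h1' (fun b hb => h2 b (hmem b hb)) (fun b hb => h3 b (hmem b hb))
      rw [hcard]
      exact this.add even_two

lemma inj_elim3 {V : Type*} {u1 u2 u3 b1 b2 b3 : V}
    (h12 : u1 ≠ u2) (h13 : u1 ≠ u3) (h23 : u2 ≠ u3)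
    (g12 : b1 ≠ b2) (g13 : b1 ≠ b3) (g23 : b2 ≠ b3)
    (c11 : u1 ≠ b1) (c12 : u1 ≠ b2) (c13 : u1 ≠ b3)
    (c21 : u2 ≠ b1) (c22 : u2 ≠ b2) (c23 : u2 ≠ b3)
    (c31 : u3 ≠ b1) (c32 : u3 ≠ b2) (c33 : u3 ≠ b3) :
    Function.Injective (Sum.elim ![u1, u2, u3] ![b1, b2, b3]) := by
  rintro (i | i) (j | j) h <;> fin_cases i <;> fin_cases j <;>
    simp only [Sum.elim_inl, Sum.elim_inr, Matrix.cons_val_zero, Matrix.cons_val_one,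
      Matrix.head_cons, Matrix.cons_val_two, Matrix.tail_cons] at h <;>
    first
      | rfl
      | (exfalso; revert h; tauto)

lemma hasMinor_K33_of_five_and_set {V : Type*} (G : SimpleGraph V) (u1 u2 b1 b2 b3 : V)
    (T : Set V) (hTconn : (G.induce T).Connected) (hTne : T.Nonempty)
    (hdisj : ∀ z ∈ T, z ≠ u1 ∧ z ≠ u2 ∧ z ≠ b1 ∧ z ≠ b2 ∧ z ≠ b3)
    (h12 : u1 ≠ u2) (g12 : b1 ≠ b2) (g13 : b1 ≠ b3) (g23 : b2 ≠ b3)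
    (c11 : u1 ≠ b1) (c12 : u1 ≠ b2) (c13 : u1 ≠ b3)
    (c21 : u2 ≠ b1) (c22 : u2 ≠ b2) (c23 : u2 ≠ b3)
    (a11 : G.Adj u1 b1) (a12 : G.Adj u1 b2) (a13 : G.Adj u1 b3)
    (a21 : G.Adj u2 b1) (a22 : G.Adj u2 b2) (a23 : G.Adj u2 b3)
    (hT1 : ∃ z ∈ T, G.Adj z b1) (hT2 : ∃ z ∈ T, G.Adj z b2) (hT3 : ∃ z ∈ T, G.Adj z b3) :
    HasMinor G (completeBipartiteGraph (Fin 3) (Fin 3)) := by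
  refine ⟨Sum.elim ![{u1}, {u2}, T] ![{b1}, {b2}, {b3}], ?_, ?_, ?_, ?_⟩
  · rintro (i | i) <;> fin_cases i <;>
      simp only [Sum.elim_inl, Sum.elim_inr, Matrix.cons_val_zero, Matrix.cons_val_one,
        Matrix.head_cons, Matrix.cons_val_two, Matrix.tail_cons]
    exacts [⟨u1, rfl⟩, ⟨u2, rfl⟩, hTne, ⟨b1, rfl⟩, ⟨b2, rfl⟩, ⟨b3, rfl⟩]
  · rintro (i | i) <;> fin_cases i <;>
      simp only [Sum.elim_inl, Sum.elim_inr, Matrix.cons_val_zero, Matrix.cons_val_one,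
        Matrix.head_cons, Matrix.cons_val_two, Matrix.tail_cons]
    exacts [induce_singleton_connected G u1, induce_singleton_connected G u2, hTconn,
      induce_singleton_connected G b1, induce_singleton_connected G b2,
      induce_singleton_connected G b3]
  · rintro (i | i) (j | j) hne <;> fin_cases i <;> fin_cases j <;>
      simp only [Sum.elim_inl, Sum.elim_inr, Matrix.cons_val_zero, Matrix.cons_val_one,
        Matrix.head_cons, Matrix.cons_val_two, Matrix.tail_cons] <;>
      first
        | exact absurd rfl hne
        | (apply Set.disjoint_singleton.2; tauto)
        | (apply Set.disjoint_singleton_left.2; intro hmem; have := hdisj _ hmem; tauto)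
        | (apply Set.disjoint_singleton_right.2; intro hmem; have := hdisj _ hmem; tauto)
  · rintro (i | i) (j | j) hadj <;>
      simp only [completeBipartiteGraph_adj, Sum.isLeft_inl, Sum.isRight_inr, Sum.isRight_inl,
        Sum.isLeft_inr, and_true, true_and, and_false, false_and, or_false, false_or] at hadj
    · exact absurd hadj (by simp)
    · obtain ⟨z1, hz1, hz1b⟩ := hT1
      obtain ⟨z2, hz2, hz2b⟩ := hT2
      obtain ⟨z3, hz3, hz3b⟩ := hT3
      fin_cases i <;> fin_cases j <;>
        simp only [Sum.elim_inl, Sum.elim_inr, Matrix.cons_val_zero, Matrix.cons_val_one,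
          Matrix.head_cons, Matrix.cons_val_two, Matrix.tail_cons]
      exacts [⟨u1, rfl, b1, rfl, a11⟩, ⟨u1, rfl, b2, rfl, a12⟩, ⟨u1, rfl, b3, rfl, a13⟩,
        ⟨u2, rfl, b1, rfl, a21⟩, ⟨u2, rfl, b2, rfl, a22⟩, ⟨u2, rfl, b3, rfl, a23⟩,
        ⟨z1, hz1, b1, rfl, hz1b⟩, ⟨z2, hz2, b2, rfl, hz2b⟩, ⟨z3, hz3, b3, rfl, hz3b⟩]
    · obtain ⟨z1, hz1, hz1b⟩ := hT1
      obtain ⟨z2, hz2, hz2b⟩ := hT2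
      obtain ⟨z3, hz3, hz3b⟩ := hT3
      fin_cases i <;> fin_cases j <;>
        simp only [Sum.elim_inl, Sum.elim_inr, Matrix.cons_val_zero, Matrix.cons_val_one,
          Matrix.head_cons, Matrix.cons_val_two, Matrix.tail_cons]
      exacts [⟨b1, rfl, u1, rfl, a11.symm⟩, ⟨b1, rfl, u2, rfl, a21.symm⟩,
        ⟨b1, rfl, z1, hz1, hz1b.symm⟩,
        ⟨b2, rfl, u1, rfl, a12.symm⟩, ⟨b2, rfl, u2, rfl, a22.symm⟩,
        ⟨b2, rfl, z2, hz2, hz2b.symm⟩,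
        ⟨b3, rfl, u1, rfl, a13.symm⟩, ⟨b3, rfl, u2, rfl, a23.symm⟩,
        ⟨b3, rfl, z3, hz3, hz3b.symm⟩]
    · exact absurd hadj (by simp)

/-- In a connected 4-regular on at least 7 vertices planar graph there is a vertex whose exact
neighborhood is not shared by any other vertex. -/
theorem stmt7 {V : Type*} [Fintype V] (G : SimpleGraph V)
    (hc : G.Connected) (h7 : 7 ≤ Fintype.card V) (hp : IsPlanar G)
    (hreg : ∀ v, (G.neighborSet v).ncard = 4) :
    ∃ v : V, ∀ w : V, w ≠ v → G.neighborSet w ≠ G.neighborSet v := by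
  classical
  by_contra hcon
  push_neg at hcon
  have hreg' : ∀ v, (G.neighborFinset v).card = 4 := fun v => by
    rw [SimpleGraph.neighborFinset_def, ← Set.ncard_eq_toFinset_card', hreg]
  choose t htne htN using hcon
  -- three vertices cannot share a neighborhood
  have h3twins : ∀ u v w : V, G.neighborSet u = G.neighborSet v →
      G.neighborSet u = G.neighborSet w → u = v ∨ u = w ∨ v = w := by
    intro u v w huv huw
    by_contra hne
    push_neg at hne
    obtain ⟨huv', huw', hvw'⟩ := hne
    -- pick three distinct neighbors of u
    have hcard := hreg' u
    obtain ⟨a, ha⟩ := Finset.card_pos.1 (by rw [hcard]; norm_num)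
    obtain ⟨b, hb⟩ := Finset.card_pos.1
      (show 0 < ((G.neighborFinset u).erase a).card by
        rw [Finset.card_erase_of_mem ha, hcard]; norm_num)
    obtain ⟨c, hcmem⟩ := Finset.card_pos.1
      (show 0 < (((G.neighborFinset u).erase a).erase b).card by
        rw [Finset.card_erase_of_mem hb, Finset.card_erase_of_mem ha, hcard]; norm_num)
    have hba : b ≠ a := Finset.ne_of_mem_erase hb
    have hcb : c ≠ b := Finset.ne_of_mem_erase hcmem
    have hca : c ≠ a := Finset.ne_of_mem_erase (Finset.mem_of_mem_erase hcmem)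
    have hau : G.Adj u a := (SimpleGraph.mem_neighborFinset _ _ _).1 ha
    have hbu : G.Adj u b :=
      (SimpleGraph.mem_neighborFinset _ _ _).1 (Finset.mem_of_mem_erase hb)
    have hcu : G.Adj u c :=
      (SimpleGraph.mem_neighborFinset _ _ _).1
        (Finset.mem_of_mem_erase (Finset.mem_of_mem_erase hcmem))
    have hadjv : ∀ z, G.Adj u z → G.Adj v z := by
      intro z hz
      have : z ∈ G.neighborSet v := huv ▸ hz
      exact this
    have hadjw : ∀ z, G.Adj u z → G.Adj w z := by
      intro z hz
      have : z ∈ G.neighborSet w := huw ▸ hz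
      exact this
    -- u, v, w are not neighbors of u
    have hnu : ∀ z, G.Adj u z → z ≠ u ∧ z ≠ v ∧ z ≠ w := by
      intro z hz
      refine ⟨?_, ?_, ?_⟩
      · intro h; subst h; exact G.loopless.irrefl _ hz
      · intro h; subst h; exact G.loopless.irrefl _ (hadjv _ hz)
      · intro h; subst h; exact G.loopless.irrefl _ (hadjw _ hz)
    obtain ⟨hnua1, hnua2, hnua3⟩ := hnu a hau
    obtain ⟨hnub1, hnub2, hnub3⟩ := hnu b hbu
    obtain ⟨hnuc1, hnuc2, hnuc3⟩ := hnu c hcu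
    apply hp.2
    apply hasMinor_K33_of_points G (Sum.elim ![u, v, w] ![a, b, c])
    · clear hreg hreg' htne htN hc h7 hcard ha hb hcmem hau hbu hcu hadjv hadjw hnu huv huw
      rintro (i | i) (j | j) h <;> fin_cases i <;> fin_cases j <;>
        simp only [Sum.elim_inl, Sum.elim_inr, Matrix.cons_val_zero, Matrix.cons_val_one,
          Matrix.head_cons, Matrix.cons_val_two, Matrix.tail_cons] at h <;>
        first
          | rfl
          | (exfalso; revert h; tauto)
    · intro i j
      fin_cases i <;> fin_cases j <;>
        simp only [Sum.elim_inl, Sum.elim_inr, Matrix.cons_val_zero, Matrix.cons_val_one,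
          Matrix.head_cons, Matrix.cons_val_two, Matrix.tail_cons]
      · exact hau
      · exact hbu
      · exact hcu
      · exact hadjv a hau
      · exact hadjv b hbu
      · exact hadjv c hcu
      · exact hadjw a hau
      · exact hadjw b hbu
      · exact hadjw c hcu
  -- uniqueness of the twin
  have huniq : ∀ v w : V, w ≠ v → G.neighborSet w = G.neighborSet v → w = t v := by
    intro v w hne hNe
    rcases h3twins w (t v) v (hNe.trans (htN v).symm) hNe with h | h | h
    · exact h
    · exact absurd h hne
    · exact absurd h (htne v)
  have htt : ∀ v, t (t v) = v := fun v =>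
    (huniq (t v) v (Ne.symm (htne v)) (htN v).symm).symm
  have htinj : ∀ p q : V, t p = t q → p = q := by
    intro p q h
    rw [← htt p, h, htt q]
  have hAdjiff : ∀ p z : V, G.Adj (t p) z ↔ G.Adj p z := by
    intro p z
    constructor <;> intro h
    · have : z ∈ G.neighborSet (t p) := h
      rw [htN p] at this; exact this
    · have : z ∈ G.neighborSet p := h
      rw [← htN p] at this; exact this
  have hAdjt : ∀ u z : V, G.Adj u z → G.Adj u (t z) := by
    intro u z h
    exact ((hAdjiff z u).2 h.symm).symm
  have hnadjt : ∀ v, ¬ G.Adj v (t v) := by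
    intro v h
    have h2 := hAdjt v (t v) h
    rw [htt v] at h2
    exact G.loopless.irrefl v h2
  have hclass : ∀ u w : V, G.neighborSet u = G.neighborSet w → u = w ∨ u = t w := by
    intro u w hN
    by_cases h : u = w
    · exact Or.inl h
    · exact Or.inr (huniq w u h hN)
  -- structure of neighborhoods
  have Lstruct : ∀ u w : V, G.Adj u w → ∃ q : V, G.Adj u q ∧ q ≠ w ∧ q ≠ t w ∧
      t q ≠ w ∧ t q ≠ t w ∧ G.neighborFinset u = {w, t w, q, t q} := by
    intro u w huw
    have hwm : w ∈ G.neighborFinset u := (SimpleGraph.mem_neighborFinset _ _ _).2 huw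
    have htwm : t w ∈ G.neighborFinset u :=
      (SimpleGraph.mem_neighborFinset _ _ _).2 (hAdjt u w huw)
    have hsub2 : ({w, t w} : Finset V) ⊆ G.neighborFinset u := by
      intro z hz
      rcases Finset.mem_insert.1 hz with rfl | hz
      · exact hwm
      · rw [Finset.mem_singleton] at hz; subst hz; exact htwm
    have hcard2 : ({w, t w} : Finset V).card = 2 := by
      rw [Finset.card_insert_of_notMem (by simp [(htne w).symm, Ne.symm]), Finset.card_singleton]
    obtain ⟨q, hq⟩ := Finset.card_pos.1
      (show 0 < (G.neighborFinset u \ {w, t w}).card by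
        rw [Finset.card_sdiff_of_subset hsub2, hcard2, hreg']; norm_num)
    have hqm : q ∈ G.neighborFinset u := (Finset.mem_sdiff.1 hq).1
    have hqn : q ∉ ({w, t w} : Finset V) := (Finset.mem_sdiff.1 hq).2
    have hq1 : q ≠ w := by intro h; exact hqn (by simp [h])
    have hq2 : q ≠ t w := by intro h; exact hqn (by simp [h])
    have hq3 : t q ≠ w := by
      intro h; exact hq2 (by rw [← htt q, h])
    have hq4 : t q ≠ t w := fun h => hq1 (htinj _ _ h)
    have hadjq : G.Adj u q := (SimpleGraph.mem_neighborFinset _ _ _).1 hqm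
    have htqm : t q ∈ G.neighborFinset u :=
      (SimpleGraph.mem_neighborFinset _ _ _).2 (hAdjt u q hadjq)
    refine ⟨q, hadjq, hq1, hq2, hq3, hq4, ?_⟩
    have hsub : ({w, t w, q, t q} : Finset V) ⊆ G.neighborFinset u := by
      intro z hz
      simp only [Finset.mem_insert, Finset.mem_singleton] at hz
      rcases hz with rfl | rfl | rfl | rfl
      exacts [hwm, htwm, hqm, htqm]
    have hcard4 : ({w, t w, q, t q} : Finset V).card = 4 := by
      rw [Finset.card_insert_of_notMem (by
          simp only [Finset.mem_insert, Finset.mem_singleton]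
          push_neg
          exact ⟨Ne.symm (htne w), hq1.symm, hq3.symm⟩),
        Finset.card_insert_of_notMem (by
          simp only [Finset.mem_insert, Finset.mem_singleton]
          push_neg
          exact ⟨hq2.symm, hq4.symm⟩),
        Finset.card_insert_of_notMem (by
          simp only [Finset.mem_singleton]
          exact (htne q).symm),
        Finset.card_singleton]
    exact (Finset.eq_of_subset_of_card_le hsub (by rw [hreg', hcard4])).symm
  have hmemiff : ∀ u p q : V, G.neighborFinset u = {p, t p, q, t q} →
      ∀ z, G.Adj u z ↔ (z = p ∨ z = t p ∨ z = q ∨ z = t q) := by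
    intro u p q hN z
    rw [← SimpleGraph.mem_neighborFinset, hN]
    simp
  -- pick the base vertex and its neighborhood structure
  have hVne : Nonempty V := by
    have : 0 < Fintype.card V := by omega
    exact Fintype.card_pos_iff.1 this
  obtain ⟨v⟩ := hVne
  obtain ⟨a, ham⟩ := Finset.card_pos.1 (show 0 < (G.neighborFinset v).card by rw [hreg']; norm_num)
  have hva : G.Adj v a := (SimpleGraph.mem_neighborFinset _ _ _).1 ham
  obtain ⟨c, hvc, hc1, hc2, hc3, hc4, hNv⟩ := Lstruct v a hva
  obtain ⟨x, hax, hx1, hx2, hx3, hx4, hNa⟩ := Lstruct a v hva.symm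
  obtain ⟨y, hcy, hy1, hy2, hy3, hy4, hNc⟩ := Lstruct c v hvc.symm
  have hNviff := hmemiff v a c hNv
  have hNaiff := hmemiff a v x hNa
  have hNciff := hmemiff c v y hNc
  -- basic distinctness around v
  have hav : a ≠ v := fun h => G.loopless.irrefl v (h ▸ hva)
  have hatv : a ≠ t v := fun h => hnadjt v (h ▸ hva)
  have hcv : c ≠ v := fun h => G.loopless.irrefl v (h ▸ hvc)
  have hctv : c ≠ t v := fun h => hnadjt v (h ▸ hvc)
  have htav : t a ≠ v := fun h => G.loopless.irrefl v (h ▸ hAdjt v a hva)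
  have htatv : t a ≠ t v := fun h => hav (htinj _ _ h)
  have htcv : t c ≠ v := fun h => G.loopless.irrefl v (h ▸ hAdjt v c hvc)
  have htctv : t c ≠ t v := fun h => hcv (htinj _ _ h)
  -- x is not in the class of a, y not in the class of c
  have hxa : x ≠ a := fun h => G.loopless.irrefl a (h ▸ hax)
  have hxta : x ≠ t a := fun h => hnadjt a (h ▸ hax)
  have htxa : t x ≠ a := fun h => hxta (by rw [← htt x, h])
  have htxta : t x ≠ t a := fun h => hxa (htinj _ _ h)
  have hyc : y ≠ c := fun h => G.loopless.irrefl c (h ▸ hcy)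
  have hytc : y ≠ t c := fun h => hnadjt c (h ▸ hcy)
  have htyc : t y ≠ c := fun h => hytc (by rw [← htt y, h])
  have htytc : t y ≠ t c := fun h => hyc (htinj _ _ h)
  by_cases hcase1 : x = c ∨ x = t c
  · -- Case 1: the six vertices v, t v, a, t a, c, t c form a closed set
    have haC : G.Adj a c := by
      rcases hcase1 with rfl | h
      · exact hax
      · have := hAdjt a x hax
        rw [h, htt c] at this
        exact this
    -- neighborhood of a is {v, t v, c, t c}
    have hNa' : ∀ z, G.Adj a z ↔ (z = v ∨ z = t v ∨ z = c ∨ z = t c) := by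
      intro z
      rw [hNaiff z]
      rcases hcase1 with rfl | h
      · exact Iff.rfl
      · subst h
        rw [htt c]
        constructor <;> rintro (h | h | h | h)
        exacts [Or.inl h, Or.inr (Or.inl h), Or.inr (Or.inr (Or.inr h)),
          Or.inr (Or.inr (Or.inl h)), Or.inl h, Or.inr (Or.inl h),
          Or.inr (Or.inr (Or.inr h)), Or.inr (Or.inr (Or.inl h))]
    -- neighborhood of c is {v, t v, a, t a}
    have haY : a = y ∨ a = t y := by
      have hca : G.Adj c a := haC.symm
      rcases (hNciff a).1 hca with h | h | h | h
      · exact absurd h hav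
      · exact absurd h hatv
      · exact Or.inl h
      · exact Or.inr h
    have hNc' : ∀ z, G.Adj c z ↔ (z = v ∨ z = t v ∨ z = a ∨ z = t a) := by
      intro z
      rw [hNciff z]
      rcases haY with rfl | h
      · exact Iff.rfl
      · rw [h, htt y]
        constructor <;> rintro (h | h | h | h)
        exacts [Or.inl h, Or.inr (Or.inl h), Or.inr (Or.inr (Or.inr h)),
          Or.inr (Or.inr (Or.inl h)), Or.inl h, Or.inr (Or.inl h),
          Or.inr (Or.inr (Or.inr h)), Or.inr (Or.inr (Or.inl h))]
    set U : Set V := {v, t v, a, t a, c, t c} with hU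
    have hUclosed : ∀ u ∈ U, ∀ z, G.Adj u z → z ∈ U := by
      intro u hu z hz
      simp only [hU, Set.mem_insert_iff, Set.mem_singleton_iff] at hu ⊢
      rcases hu with rfl | rfl | rfl | rfl | rfl | rfl
      · rcases (hNviff z).1 hz with rfl | rfl | rfl | rfl <;> simp
      · rcases (hNviff z).1 ((hAdjiff _ z).1 hz) with rfl | rfl | rfl | rfl <;> simp
      · rcases (hNa' z).1 hz with rfl | rfl | rfl | rfl <;> simp
      · rcases (hNa' z).1 ((hAdjiff _ z).1 hz) with rfl | rfl | rfl | rfl <;> simp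
      · rcases (hNc' z).1 hz with rfl | rfl | rfl | rfl <;> simp
      · rcases (hNc' z).1 ((hAdjiff _ z).1 hz) with rfl | rfl | rfl | rfl <;> simp
    have hreachU : ∀ (p q : V) (w : G.Walk p q), p ∈ U → q ∈ U := by
      intro p q w
      induction w with
      | nil => exact id
      | cons h w ih => exact fun hp => ih (hUclosed _ hp _ h)
    have hallU : ∀ u : V, u ∈ U := by
      intro u
      obtain ⟨p⟩ := hc.preconnected v u
      exact hreachU v u p (by simp [hU])
    have hsubU : (Finset.univ : Finset V) ⊆ {v, t v, a, t a, c, t c} := by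
      intro u _
      have := hallU u
      simp only [hU, Set.mem_insert_iff, Set.mem_singleton_iff] at this
      simp only [Finset.mem_insert, Finset.mem_singleton]
      exact this
    have hle6 : Fintype.card V ≤ 6 := by
      have h1 := Finset.card_insert_le v ({t v, a, t a, c, t c} : Finset V)
      have h2 := Finset.card_insert_le (t v) ({a, t a, c, t c} : Finset V)
      have h3 := Finset.card_insert_le a ({t a, c, t c} : Finset V)
      have h4 := Finset.card_insert_le (t a) ({c, t c} : Finset V)
      have h5 := Finset.card_insert_le c ({t c} : Finset V)
      have h6 : ({t c} : Finset V).card = 1 := Finset.card_singleton _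
      have h0 := Finset.card_le_card hsubU
      rw [Finset.card_univ] at h0
      omega
    omega
  · -- Case 2 : x is not in the class of c
    push_neg at hcase1
    obtain ⟨hxc, hxtc⟩ := hcase1
    have htxc : t x ≠ c := fun h => hxtc (by rw [← htt x, h])
    have htxtc : t x ≠ t c := fun h => hxc (htinj _ _ h)
    -- y is not in the class of a
    have hya : y ≠ a := by
      intro h
      have hca : G.Adj a c := (h ▸ hcy).symm
      rcases (hNaiff c).1 hca with h' | h' | h' | h'
      · exact hcv h'
      · exact hctv h'
      · exact hxc h'.symm
      · exact htxc h'.symm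
    have hyta : y ≠ t a := by
      intro h
      have hca : G.Adj a c := ((hAdjiff a c).1 (h ▸ hcy).symm)
      rcases (hNaiff c).1 hca with h' | h' | h' | h'
      · exact hcv h'
      · exact hctv h'
      · exact hxc h'.symm
      · exact htxc h'.symm
    have htya : t y ≠ a := fun h => hyta (by rw [← htt y, h])
    have htyta : t y ≠ t a := fun h => hya (htinj _ _ h)
    by_cases hcase2 : x = y ∨ x = t y
    · -- Case 2a : direct K33 on {v, t v, x} vs {a, t a, c}
      have hxcadj : G.Adj x c := by
        rcases hcase2 with rfl | h
        · exact hcy.symm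
        · exact (h ▸ (hAdjt c y hcy)).symm
      apply hp.2
      apply hasMinor_K33_of_points G (Sum.elim ![v, t v, x] ![a, t a, c])
      · exact inj_elim3 (Ne.symm (htne v)) hx1.symm hx2.symm (Ne.symm (htne a)) hc1.symm
          hc2.symm hav.symm htav.symm hcv.symm hatv.symm htatv.symm hctv.symm hxa hxta hxc
      · intro i j
        fin_cases i <;> fin_cases j <;>
          simp only [Sum.elim_inl, Sum.elim_inr, Matrix.cons_val_zero, Matrix.cons_val_one,
            Matrix.head_cons, Matrix.cons_val_two, Matrix.tail_cons]
        · exact hva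
        · exact hAdjt v a hva
        · exact hvc
        · exact (hAdjiff v a).2 hva
        · exact hAdjt (t v) a ((hAdjiff v a).2 hva)
        · exact (hAdjiff v c).2 hvc
        · exact hax.symm
        · exact hAdjt x a hax.symm
        · exact hxcadj
    · -- Case 2b
      push_neg at hcase2
      obtain ⟨hxy, hxty⟩ := hcase2
      have htxy : t x ≠ y := fun h => hxty (by rw [← htt x, h])
      have htxty : t x ≠ t y := fun h => hxy (htinj _ _ h)
      set F : Set V := {v, t v, a, t a, c, t c} with hF
      have hmemF : ∀ z, z ∈ F ↔ (z = v ∨ z = t v ∨ z = a ∨ z = t a ∨ z = c ∨ z = t c) := by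
        intro z
        simp [hF]
      have hxF : x ∉ F := by
        rw [hmemF]
        push_neg
        exact ⟨hx1, hx2, hxa, hxta, hxc, hxtc⟩
      have htxF : t x ∉ F := by
        rw [hmemF]
        push_neg
        exact ⟨hx3, hx4, htxa, htxta, htxc, htxtc⟩
      have hyF : y ∉ F := by
        rw [hmemF]
        push_neg
        exact ⟨hy1, hy2, hya, hyta, hyc, hytc⟩
      have htyF : t y ∉ F := by
        rw [hmemF]
        push_neg
        exact ⟨hy3, hy4, htya, htyta, htyc, htytc⟩
      -- how a vertex outside F can be adjacent to a vertex of F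
      have hFnbr : ∀ u z : V, u ∉ F → G.Adj u z → z ∈ F →
          ((z = a ∨ z = t a) ∧ (u = x ∨ u = t x)) ∨
          ((z = c ∨ z = t c) ∧ (u = y ∨ u = t y)) := by
        intro u z huF hadj hzF
        have hvnbr : ¬ G.Adj v u := by
          intro h
          rcases (hNviff u).1 h with rfl | rfl | rfl | rfl <;>
            exact huF (by rw [hmemF]; simp)
        have hanbr : G.Adj a u → u = x ∨ u = t x := by
          intro h
          rcases (hNaiff u).1 h with rfl | rfl | rfl | rfl
          · exact absurd (by rw [hmemF]; simp) huF
          · exact absurd (by rw [hmemF]; simp) huF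
          · exact Or.inl rfl
          · exact Or.inr rfl
        have hcnbr : G.Adj c u → u = y ∨ u = t y := by
          intro h
          rcases (hNciff u).1 h with rfl | rfl | rfl | rfl
          · exact absurd (by rw [hmemF]; simp) huF
          · exact absurd (by rw [hmemF]; simp) huF
          · exact Or.inl rfl
          · exact Or.inr rfl
        rcases (hmemF z).1 hzF with rfl | rfl | rfl | rfl | rfl | rfl
        · exact absurd hadj.symm hvnbr
        · exact absurd ((hAdjiff _ u).1 hadj.symm) hvnbr
        · exact Or.inl ⟨Or.inl rfl, hanbr hadj.symm⟩
        · exact Or.inl ⟨Or.inr rfl, hanbr ((hAdjiff _ u).1 hadj.symm)⟩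
        · exact Or.inr ⟨Or.inl rfl, hcnbr hadj.symm⟩
        · exact Or.inr ⟨Or.inr rfl, hcnbr ((hAdjiff _ u).1 hadj.symm)⟩
      set S : Set V := {u | Relation.ReflTransGen (fun p q => G.Adj p q ∧ q ∉ F) x u}
        with hS
      have hxS : x ∈ S := Relation.ReflTransGen.refl
      have hSF : ∀ u ∈ S, u ∉ F := by
        intro u hu
        rcases Relation.ReflTransGen.cases_tail hu with h | ⟨b, _, hb⟩
        · rw [h]; exact hxF
        · exact hb.2
      have hSstep : ∀ u ∈ S, ∀ z, G.Adj u z → z ∉ F → z ∈ S := by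
        intro u hu z h1 h2
        exact Relation.ReflTransGen.tail hu ⟨h1, h2⟩
      -- the twin of any vertex of S is in S
      have hSt : ∀ u ∈ S, t u ∈ S := by
        intro u hu
        have huF := hSF u hu
        obtain ⟨w0, hw0⟩ := Finset.card_pos.1
          (show 0 < (G.neighborFinset u).card by rw [hreg']; norm_num)
        have hadjw0 : G.Adj u w0 := (SimpleGraph.mem_neighborFinset _ _ _).1 hw0
        obtain ⟨q, huq, hq1, hq2, hq3, hq4, hNu⟩ := Lstruct u w0 hadjw0
        -- at least one of w0, q has its class outside F
        have hpick : ∃ z, G.Adj u z ∧ z ∉ F := by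
          by_contra hnone
          push_neg at hnone
          have hw0F : w0 ∈ F := hnone w0 hadjw0
          have hqF : q ∈ F := hnone q huq
          rcases hFnbr u w0 huF hadjw0 hw0F with ⟨hz, hu'⟩ | ⟨hz, hu'⟩ <;>
            rcases hFnbr u q huF huq hqF with ⟨hz', hu''⟩ | ⟨hz', hu''⟩
          · rcases hz with rfl | rfl <;> rcases hz' with h | h
            · exact hq1 h
            · exact hq2 h
            · exact hq2 (h.trans (htt _).symm)
            · exact hq1 h
          · rcases hu' with rfl | rfl <;> rcases hu'' with h | h
            · exact hxy h
            · exact hxty h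
            · exact htxy h
            · exact htxty h
          · rcases hu' with rfl | rfl <;> rcases hu'' with h | h
            · exact hxy h.symm
            · exact htxy h.symm
            · exact hxty h.symm
            · exact htxty h.symm
          · rcases hz with rfl | rfl <;> rcases hz' with h | h
            · exact hq1 h
            · exact hq2 h
            · exact hq2 (h.trans (htt _).symm)
            · exact hq1 h
        obtain ⟨z, huz, hzF⟩ := hpick
        have hzS : z ∈ S := hSstep u hu z huz hzF
        have hztu : G.Adj z (t u) := ((hAdjiff u z).2 huz).symm
        have htuF : t u ∉ F := by
          intro htuF
          rcases hFnbr z (t u) hzF hztu htuF with ⟨hz', _⟩ | ⟨hz', _⟩ <;>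
          · rcases hz' with h | h
            · exact huF (by rw [hmemF]; rw [← htt u, h]; simp)
            · exact huF (by rw [hmemF]; have := htinj _ _ h; rw [this]; simp)
        exact hSstep z hzS (t u) hztu htuF
      by_cases hSY : ∃ u ∈ S, u = y ∨ u = t y
      · -- Case 2b-i : a path from the class of x to the class of y avoiding F
        obtain ⟨u, huS, huY⟩ := hSY
        have hwalk : ∀ w, w ∈ S → ∃ p : G.Walk x w, ∀ z ∈ p.support, z ∉ F := by
          intro w hw
          induction hw with
          | refl =>
              refine ⟨SimpleGraph.Walk.nil, ?_⟩
              intro z hz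
              rw [SimpleGraph.Walk.support_nil, List.mem_singleton] at hz
              subst hz
              exact hxF
          | tail h1 h2 ih =>
              obtain ⟨p, hps⟩ := ih
              refine ⟨p.concat h2.1, ?_⟩
              intro z hz
              rw [SimpleGraph.Walk.support_concat] at hz
              rcases List.mem_append.1 hz with h | h
              · exact hps z h
              · rw [List.mem_singleton] at h
                subst h
                exact h2.2
        obtain ⟨p, hpsup⟩ := hwalk u huS
        set T : Set V := {z | z ∈ p.support} with hT
        have hTconn : (G.induce T).Connected := p.connected_induce_support
        have hxT : x ∈ T := p.start_mem_support
        have huT : u ∈ T := p.end_mem_support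
        have hdisjT : ∀ z ∈ T, z ≠ v ∧ z ≠ t v ∧ z ≠ a ∧ z ≠ t a ∧ z ≠ c := by
          intro z hz
          have hzF := hpsup z hz
          rw [hmemF] at hzF
          push_neg at hzF
          exact ⟨hzF.1, hzF.2.1, hzF.2.2.1, hzF.2.2.2.1, hzF.2.2.2.2.1⟩
        have hT3 : ∃ z ∈ T, G.Adj z c := by
          refine ⟨u, huT, ?_⟩
          rcases huY with rfl | rfl
          · exact hcy.symm
          · exact (hAdjt c y hcy).symm
        exact hp.2 (hasMinor_K33_of_five_and_set G v (t v) a (t a) c T hTconn ⟨x, hxT⟩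
          hdisjT (htne v).symm (htne a).symm hc1.symm hc2.symm
          hav.symm htav.symm hcv.symm hatv.symm htatv.symm hctv.symm
          hva (hAdjt v a hva) hvc
          ((hAdjiff v a).2 hva) (hAdjt (t v) a ((hAdjiff v a).2 hva)) ((hAdjiff v c).2 hvc)
          ⟨x, hxT, hax.symm⟩ ⟨x, hxT, hAdjt x a hax.symm⟩ hT3)
      · -- Case 2b-ii : parity contradiction
        push_neg at hSY
        -- a canonical representative of each twin class
        set κ : V → ℕ := fun z => ((Fintype.equivFin V) z : ℕ) with hκ
        have hκinj : ∀ p q : V, κ p = κ q → p = q := fun p q h =>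
          (Fintype.equivFin V).injective (Fin.ext h)
        set rep : V → V := fun z => if κ z ≤ κ (t z) then z else t z with hrep
        have hrep_or : ∀ z, rep z = z ∨ rep z = t z := by
          intro z
          by_cases h : κ z ≤ κ (t z) <;> simp [hrep, h]
        have hrept : ∀ z, rep (t z) = rep z := by
          intro z
          have hne : κ z ≠ κ (t z) := fun h => htne z (hκinj _ _ h.symm)
          have h1 : t (t z) = z := htt z
          rcases lt_or_gt_of_ne hne with h | h
          · show (if κ (t z) ≤ κ (t (t z)) then t z else t (t z)) =
              (if κ z ≤ κ (t z) then z else t z)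
            rw [h1, if_neg (not_le.2 h), if_pos (le_of_lt h)]
          · show (if κ (t z) ≤ κ (t (t z)) then t z else t (t z)) =
              (if κ z ≤ κ (t z) then z else t z)
            rw [h1, if_pos (le_of_lt h), if_neg (not_le.2 h)]
        have hrepfix : ∀ z, rep (rep z) = rep z := by
          intro z
          rcases hrep_or z with h | h
          · rw [h, h]
          · rw [h, hrept, ← h]
        set SR : Finset V := Finset.univ.filter (fun r => r ∈ S ∧ rep r = r) with hSR
        have hSRmem : ∀ r : V, r ∈ SR ↔ (r ∈ S ∧ rep r = r) := by
          intro r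
          simp [hSR]
        have hrepxSR : rep x ∈ SR := by
          rw [hSRmem]
          constructor
          · rcases hrep_or x with h | h
            · rw [h]; exact hxS
            · rw [h]; exact hSt x hxS
          · exact hrepfix x
        -- counting neighbours inside SR
        have hcount : ∀ r ∈ SR, (G.neighborFinset r ∩ SR).card =
            if r = rep x then 1 else 2 := by
          intro r hrSR
          obtain ⟨hrS, hrfix⟩ := (hSRmem r).1 hrSR
          have hrF : r ∉ F := hSF r hrS
          have hclassalt : ∀ z, G.Adj r z →
              (z ∉ F ∧ t z ∉ F) ∨ ((z = a ∨ z = t a) ∧ (r = x ∨ r = t x)) := by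
            intro z hz
            by_cases hzF : z ∈ F
            · rcases hFnbr r z hrF hz hzF with ⟨h1, h2⟩ | ⟨h1, h2⟩
              · exact Or.inr ⟨h1, h2⟩
              · exact absurd h2 (by
                  have := hSY r hrS
                  simp [this.1, this.2])
            · by_cases htzF : t z ∈ F
              · rcases hFnbr r (t z) hrF (hAdjt r z hz) htzF with ⟨h1, h2⟩ | ⟨h1, h2⟩
                · refine Or.inr ⟨?_, h2⟩
                  rcases h1 with h | h
                  · exact Or.inr (by rw [← htt z, h])
                  · exact Or.inl (htinj _ _ h)
                · exact absurd h2 (by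
                    have := hSY r hrS
                    simp [this.1, this.2])
              · exact Or.inl ⟨hzF, htzF⟩
          by_cases hrx : r = x ∨ r = t x
          · -- r is in the class of x : exactly one neighbour class inside S
            have hreq : r = rep x := by
              rcases hrx with rfl | rfl
              · exact hrfix.symm
              · rw [← hrept x, hrfix]
            rw [if_pos hreq]
            have hra : G.Adj r a := by
              rcases hrx with rfl | rfl
              · exact hax.symm
              · exact (hAdjiff x a).2 hax.symm
            obtain ⟨q, hrq, hq1', hq2', hq3', hq4', hNr⟩ := Lstruct r a hra
            have hqgood : q ∉ F ∧ t q ∉ F := by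
              rcases hclassalt q hrq with h | ⟨h, _⟩
              · exact h
              · rcases h with h | h
                · exact absurd h hq1'
                · exact absurd h hq2'
            have hqS : q ∈ S := hSstep r hrS q hrq hqgood.1
            have htqS : t q ∈ S := hSstep r hrS (t q) (hAdjt r q hrq) hqgood.2
            have : G.neighborFinset r ∩ SR = {rep q} := by
              ext z
              simp only [Finset.mem_inter, Finset.mem_singleton, hNr, Finset.mem_insert,
                Finset.mem_singleton]
              constructor
              · rintro ⟨hz1, hz2⟩
                obtain ⟨hzS, hzfix⟩ := (hSRmem z).1 hz2
                have hzF := hSF z hzS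
                rcases hz1 with rfl | rfl | rfl | rfl
                · exact absurd (by rw [hmemF]; simp) hzF
                · exact absurd (by rw [hmemF]; simp) hzF
                · exact hzfix.symm
                · rw [← hrept q, hzfix]
              · rintro rfl
                refine ⟨?_, (hSRmem _).2 ⟨?_, hrepfix q⟩⟩
                · rcases hrep_or q with h | h <;> rw [h] <;> simp
                · rcases hrep_or q with h | h <;> rw [h]
                  · exact hqS
                  · exact htqS
            rw [this, Finset.card_singleton]
          · -- both neighbour classes avoid F
            have hrnx : r ≠ rep x := by
              intro h
              rcases hrep_or x with h' | h'
              · exact hrx (Or.inl (h.trans h'))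
              · exact hrx (Or.inr (h.trans h'))
            rw [if_neg hrnx]
            obtain ⟨w0, hw0⟩ := Finset.card_pos.1
              (show 0 < (G.neighborFinset r).card by rw [hreg']; norm_num)
            have hadjw0 : G.Adj r w0 := (SimpleGraph.mem_neighborFinset _ _ _).1 hw0
            obtain ⟨q, hrq, hq1', hq2', hq3', hq4', hNr⟩ := Lstruct r w0 hadjw0
            have hw0good : w0 ∉ F ∧ t w0 ∉ F := by
              rcases hclassalt w0 hadjw0 with h | ⟨_, h⟩
              · exact h
              · exact absurd h hrx
            have hqgood : q ∉ F ∧ t q ∉ F := by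
              rcases hclassalt q hrq with h | ⟨_, h⟩
              · exact h
              · exact absurd h hrx
            have hw0S : w0 ∈ S := hSstep r hrS w0 hadjw0 hw0good.1
            have htw0S : t w0 ∈ S := hSstep r hrS (t w0) (hAdjt r w0 hadjw0) hw0good.2
            have hqS : q ∈ S := hSstep r hrS q hrq hqgood.1
            have htqS : t q ∈ S := hSstep r hrS (t q) (hAdjt r q hrq) hqgood.2
            have hset : G.neighborFinset r ∩ SR = {rep w0, rep q} := by
              ext z
              simp only [Finset.mem_inter, Finset.mem_insert, Finset.mem_singleton, hNr]
              constructor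
              · rintro ⟨hz1, hz2⟩
                obtain ⟨hzS, hzfix⟩ := (hSRmem z).1 hz2
                rcases hz1 with rfl | rfl | rfl | rfl
                · exact Or.inl hzfix.symm
                · exact Or.inl (by rw [← hrept w0, hzfix])
                · exact Or.inr hzfix.symm
                · exact Or.inr (by rw [← hrept q, hzfix])
              · rintro (rfl | rfl)
                · refine ⟨?_, (hSRmem _).2 ⟨?_, hrepfix w0⟩⟩
                  · rcases hrep_or w0 with h | h <;> rw [h] <;> simp
                  · rcases hrep_or w0 with h | h <;> rw [h]
                    · exact hw0S
                    · exact htw0S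
                · refine ⟨?_, (hSRmem _).2 ⟨?_, hrepfix q⟩⟩
                  · rcases hrep_or q with h | h <;> rw [h] <;> simp
                  · rcases hrep_or q with h | h <;> rw [h]
                    · exact hqS
                    · exact htqS
            have hrepne : rep w0 ≠ rep q := by
              rcases hrep_or w0 with h | h <;> rcases hrep_or q with h' | h' <;>
                rw [h, h'] <;> intro hh
              · exact hq1' hh.symm
              · exact hq3' hh.symm
              · exact hq2' hh.symm
              · exact hq4' hh.symm
            rw [hset, Finset.card_insert_of_notMem (by simpa using hrepne),
              Finset.card_singleton]
        -- double counting the adjacent pairs inside SR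
        set P : Finset (V × V) := (SR ×ˢ SR).filter (fun pq => G.Adj pq.1 pq.2) with hP
        have hPmem : ∀ pq : V × V, pq ∈ P ↔ (pq.1 ∈ SR ∧ pq.2 ∈ SR ∧ G.Adj pq.1 pq.2) := by
          intro pq
          simp [hP, Finset.mem_filter, Finset.mem_product, and_assoc]
        have hPeven : Even P.card := by
          apply even_card_of_invol P Prod.swap
          · intro pq hpq
            rw [hPmem] at hpq ⊢
            exact ⟨hpq.2.1, hpq.1, hpq.2.2.symm⟩
          · intro pq _
            exact Prod.swap_swap pq
          · intro pq hpq
            intro hh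
            have h1 : pq.2 = pq.1 := congrArg Prod.fst hh
            have := ((hPmem pq).1 hpq).2.2
            rw [h1] at this
            exact G.loopless.irrefl _ this
        have hPsum : P.card = ∑ r ∈ SR, (G.neighborFinset r ∩ SR).card := by
          rw [Finset.card_eq_sum_card_fiberwise
            (f := Prod.fst) (t := SR) (fun pq hpq => ((hPmem pq).1 hpq).1)]
          apply Finset.sum_congr rfl
          intro r hrSR
          have himg : P.filter (fun pq => pq.1 = r) =
              (G.neighborFinset r ∩ SR).image (fun z => (r, z)) := by
            ext pq
            simp only [Finset.mem_filter, Finset.mem_image, Finset.mem_inter,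
              SimpleGraph.mem_neighborFinset]
            constructor
            · rintro ⟨hpq, rfl⟩
              rw [hPmem] at hpq
              exact ⟨pq.2, ⟨hpq.2.2, hpq.2.1⟩, rfl⟩
            · rintro ⟨z, ⟨hz1, hz2⟩, rfl⟩
              exact ⟨(hPmem _).2 ⟨hrSR, hz2, hz1⟩, rfl⟩
          rw [himg, Finset.card_image_of_injective _ (fun z1 z2 h => congrArg Prod.snd h)]
        have hodd : P.card = 1 + 2 * (SR.card - 1) := by
          rw [hPsum, Finset.sum_congr rfl hcount, ← Finset.add_sum_erase _ _ hrepxSR,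
            if_pos rfl]
          congr 1
          rw [Finset.sum_congr rfl (fun r hr => if_neg (Finset.ne_of_mem_erase hr)),
            Finset.sum_const, Finset.card_erase_of_mem hrepxSR, smul_eq_mul, Nat.mul_comm]
        have hSRpos : 0 < SR.card := Finset.card_pos.2 ⟨rep x, hrepxSR⟩
        rcases hPeven with ⟨k, hk⟩
        omega
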